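/- For every n ≥ 1, the star chromatic index of the complete graph K_n is at least 3n(n−1)/(n+4). -/

import Mathlib

open SimpleGraph

/-- A star edge-coloring with `k` colors: a proper edge-coloring such that no
path or cycle with four edges is bicolored. -/
def IsStarEdgeColoring {V : Type*} {k : ℕ} (G : SimpleGraph V) (c : Sym2 V → Fin k) : Prop :=
  (∀ ⦃e f : Sym2 V⦄, e ∈ G.edgeSet → f ∈ G.edgeSet → e ≠ f →
      (∃ v, v ∈ e ∧ v ∈ f) → c e ≠ c f) ∧
  (∀ v0 v1 v2 v3 v4 : V, G.Adj v0 v1 → G.Adj v1 v2 → G.Adj v2 v3 → G.Adj v3 v4 →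
      v0 ≠ v2 → v0 ≠ v3 → v1 ≠ v3 → v1 ≠ v4 → v2 ≠ v4 →
      ¬ (c s(v0, v1) = c s(v2, v3) ∧ c s(v1, v2) = c s(v3, v4)))

/-- The star chromatic index: the least `k` admitting a star `k`-edge-coloring. -/
noncomputable def starChromaticIndex {V : Type*} (G : SimpleGraph V) : ℕ :=
  sInf {k | ∃ c : Sym2 V → Fin k, IsStarEdgeColoring G c}

namespace StarLowerAux

open Finset

variable {n k : ℕ}

/-- ordered representatives of edges of color `j` -/
def Rset (c : Sym2 (Fin n) → Fin k) (j : Fin k) : Finset (Fin n × Fin n) :=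
  Finset.univ.offDiag.filter (fun p => c s(p.1, p.2) = j)

/-- pairs of ordered representatives of two disjoint equally colored edges -/
def Tset (c : Sym2 (Fin n) → Fin k) : Finset ((Fin n × Fin n) × (Fin n × Fin n)) :=
  (Finset.univ.offDiag ×ˢ Finset.univ.offDiag).filter
    (fun q => q.1.1 ≠ q.2.1 ∧ q.1.1 ≠ q.2.2 ∧ q.1.2 ≠ q.2.1 ∧ q.1.2 ≠ q.2.2 ∧
      c s(q.1.1, q.1.2) = c s(q.2.1, q.2.2))

lemma mem_Rset {c : Sym2 (Fin n) → Fin k} {j : Fin k} {p : Fin n × Fin n} :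
    p ∈ Rset c j ↔ p.1 ≠ p.2 ∧ c s(p.1, p.2) = j := by
  simp [Rset, Finset.mem_offDiag]

lemma mem_Tset {c : Sym2 (Fin n) → Fin k} {q : (Fin n × Fin n) × (Fin n × Fin n)} :
    q ∈ Tset c ↔ (q.1.1 ≠ q.1.2 ∧ q.2.1 ≠ q.2.2) ∧
      (q.1.1 ≠ q.2.1 ∧ q.1.1 ≠ q.2.2 ∧ q.1.2 ≠ q.2.1 ∧ q.1.2 ≠ q.2.2) ∧
      c s(q.1.1, q.1.2) = c s(q.2.1, q.2.2) := by
  simp only [Tset, Finset.mem_filter, Finset.mem_product, Finset.mem_offDiag, Finset.mem_univ,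
    true_and]
  tauto

section WithColoring

variable {c : Sym2 (Fin n) → Fin k}

lemma comp_adj {a b : Fin n} (h : a ≠ b) : (completeGraph (Fin n)).Adj a b := h

lemma prop_ne (hc : IsStarEdgeColoring (completeGraph (Fin n)) c)
    {a b d : Fin n} (hab : a ≠ b) (had : a ≠ d) (hbd : b ≠ d) :
    c s(a, b) ≠ c s(a, d) := by
  refine hc.1 ((SimpleGraph.mem_edgeSet _).mpr (comp_adj hab))
    ((SimpleGraph.mem_edgeSet _).mpr (comp_adj had)) ?_ ⟨a, ?_, ?_⟩
  · intro h
    rw [Sym2.eq_iff] at h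
    rcases h with ⟨_, h⟩ | ⟨h, _⟩
    · exact hbd h
    · exact had h
  · simp
  · simp

lemma partner_unique (hc : IsStarEdgeColoring (completeGraph (Fin n)) c)
    {a b d : Fin n} (hab : a ≠ b) (had : a ≠ d)
    (h : c s(a, b) = c s(a, d)) : b = d := by
  by_contra hbd
  exact prop_ne hc hab had hbd h

lemma star5 (hc : IsStarEdgeColoring (completeGraph (Fin n)) c) {v0 v1 v2 v3 v4 : Fin n}
    (h01 : v0 ≠ v1) (h12 : v1 ≠ v2) (h23 : v2 ≠ v3) (h34 : v3 ≠ v4)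
    (h02 : v0 ≠ v2) (h03 : v0 ≠ v3) (h13 : v1 ≠ v3) (h14 : v1 ≠ v4) (h24 : v2 ≠ v4)
    (hA : c s(v0, v1) = c s(v2, v3)) (hB : c s(v1, v2) = c s(v3, v4)) : False :=
  hc.2 v0 v1 v2 v3 v4 (comp_adj h01) (comp_adj h12) (comp_adj h23) (comp_adj h34)
    h02 h03 h13 h14 h24 ⟨hA, hB⟩

lemma disjoint_of_eq_color (hc : IsStarEdgeColoring (completeGraph (Fin n)) c)
    {a b a' b' : Fin n} (hab : a ≠ b) (hab' : a' ≠ b')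
    (hcc : c s(a, b) = c s(a', b')) (hne : s(a, b) ≠ s(a', b')) :
    a ≠ a' ∧ a ≠ b' ∧ b ≠ a' ∧ b ≠ b' := by
  have H : ∀ v : Fin n, v ∈ s(a, b) → v ∈ s(a', b') → False := fun v hv hv' =>
    hc.1 ((SimpleGraph.mem_edgeSet _).mpr (comp_adj hab))
      ((SimpleGraph.mem_edgeSet _).mpr (comp_adj hab')) hne ⟨v, hv, hv'⟩ hcc
  refine ⟨?_, ?_, ?_, ?_⟩ <;> intro h
  · exact H a (by simp) (by simp [h])
  · exact H a (by simp) (by simp [h])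
  · exact H b (by simp) (by simp [h])
  · exact H b (by simp) (by simp [h])

lemma swap_mem_Rset {j : Fin k} {p : Fin n × Fin n} (hp : p ∈ Rset c j) :
    (p.2, p.1) ∈ Rset c j := by
  rw [mem_Rset] at hp ⊢
  exact ⟨hp.1.symm, by rw [Sym2.eq_swap]; exact hp.2⟩

lemma fst_injOn (hc : IsStarEdgeColoring (completeGraph (Fin n)) c) (j : Fin k) :
    Set.InjOn Prod.fst ((Rset c j : Finset (Fin n × Fin n)) : Set (Fin n × Fin n)) := by
  rintro ⟨p1, p2⟩ hp ⟨q1, q2⟩ hq h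
  simp only [Finset.mem_coe, mem_Rset] at hp hq
  simp only at h
  subst h
  have : p2 = q2 := partner_unique hc hp.1 hq.1 (by rw [hp.2, hq.2])
  subst this
  rfl

lemma card_Rset_le (hc : IsStarEdgeColoring (completeGraph (Fin n)) c) (j : Fin k) :
    (Rset c j).card ≤ n := by
  calc (Rset c j).card = ((Rset c j).image Prod.fst).card :=
        (Finset.card_image_of_injOn (fst_injOn hc j)).symm
    _ ≤ (Finset.univ : Finset (Fin n)).card := Finset.card_le_card (Finset.subset_univ _)
    _ = n := by simp

lemma sum_card_Rset : ∑ j : Fin k, (Rset c j).card = n * n - n := by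
  have h := Finset.card_eq_sum_card_fiberwise
    (s := (Finset.univ.offDiag : Finset (Fin n × Fin n))) (t := (Finset.univ : Finset (Fin k)))
    (f := fun p => c s(p.1, p.2)) (fun p _ => Finset.mem_univ _)
  rw [Finset.offDiag_card] at h
  simp only [Finset.card_univ, Fintype.card_fin] at h
  simp only [Rset]
  exact h.symm

/-- Count `Tset` color class by color class: each color `j` contributes `r_j (r_j - 2)`. -/
lemma Tcard (hc : IsStarEdgeColoring (completeGraph (Fin n)) c) :
    (Tset c).card = ∑ j : Fin k, (Rset c j).card * ((Rset c j).card - 2) := by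
  rw [Finset.card_eq_sum_card_fiberwise
    (f := fun q => c s(q.1.1, q.1.2)) (t := (Finset.univ : Finset (Fin k)))
    (fun q _ => Finset.mem_univ _)]
  refine Finset.sum_congr rfl (fun j _ => ?_)
  have hfib : (Tset c).filter (fun q => c s(q.1.1, q.1.2) = j) =
      (Rset c j ×ˢ Rset c j).filter
        (fun q => q.1.1 ≠ q.2.1 ∧ q.1.1 ≠ q.2.2 ∧ q.1.2 ≠ q.2.1 ∧ q.1.2 ≠ q.2.2) := by
    ext q
    simp only [Finset.mem_filter, mem_Tset, Finset.mem_product, mem_Rset]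
    constructor
    · rintro ⟨⟨⟨h1, h2⟩, hd, hcc⟩, hj⟩
      exact ⟨⟨⟨h1, hj⟩, ⟨h2, by rw [← hcc]; exact hj⟩⟩, hd⟩
    · rintro ⟨⟨⟨h1, hj⟩, h2, hj'⟩, hd⟩
      exact ⟨⟨⟨h1, h2⟩, hd, by rw [hj, hj']⟩, hj⟩
  rw [hfib]
  rw [Finset.card_eq_sum_card_fiberwise (f := Prod.fst) (t := Rset c j)
    (fun q hq => by
      simp only [Finset.mem_coe, Finset.mem_filter, Finset.mem_product] at hq
      exact hq.1.1)]
  have hper : ∀ p ∈ Rset c j,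
      (((Rset c j ×ˢ Rset c j).filter
        (fun q => q.1.1 ≠ q.2.1 ∧ q.1.1 ≠ q.2.2 ∧ q.1.2 ≠ q.2.1 ∧ q.1.2 ≠ q.2.2)).filter
          (fun q => q.1 = p)).card = (Rset c j).card - 2 := by
    intro p hp
    have hset : ((Rset c j ×ˢ Rset c j).filter
        (fun q => q.1.1 ≠ q.2.1 ∧ q.1.1 ≠ q.2.2 ∧ q.1.2 ≠ q.2.1 ∧ q.1.2 ≠ q.2.2)).filter
          (fun q => q.1 = p) = {p} ×ˢ (Rset c j \ {p, (p.2, p.1)}) := by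
      ext q
      simp only [Finset.mem_filter, Finset.mem_product, Finset.mem_singleton, Finset.mem_sdiff,
        Finset.mem_insert]
      constructor
      · rintro ⟨⟨⟨hq1, hq2⟩, hd1, hd2, hd3, hd4⟩, hq1p⟩
        subst hq1p
        refine ⟨rfl, hq2, ?_⟩
        rintro (h | h)
        · exact hd1 (by rw [h])
        · exact hd2 (by rw [h])
      · rintro ⟨hq1p, hq2, hnot⟩
        have hp' := hp
        rw [mem_Rset] at hp' 
        have hq2' := hq2
        rw [mem_Rset] at hq2'
        have hne : s(p.1, p.2) ≠ s(q.2.1, q.2.2) := by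
          intro h
          rw [Sym2.eq_iff] at h
          rcases h with ⟨h1, h2⟩ | ⟨h1, h2⟩
          · exact hnot (Or.inl (Prod.ext h1.symm h2.symm))
          · exact hnot (Or.inr (Prod.ext h2.symm h1.symm))
        have hdisj := disjoint_of_eq_color hc hp'.1 hq2'.1
          (by rw [hp'.2, hq2'.2]) hne
        subst hq1p
        exact ⟨⟨⟨hp, hq2⟩, hdisj.1, hdisj.2.1, hdisj.2.2.1, hdisj.2.2.2⟩, rfl⟩
    rw [hset, Finset.card_product, Finset.card_singleton, one_mul]
    have hsub : ({p, (p.2, p.1)} : Finset (Fin n × Fin n)) ⊆ Rset c j := by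
      intro x hx
      rcases Finset.mem_insert.mp hx with h | h
      · subst h; exact hp
      · rw [Finset.mem_singleton] at h
        subst h
        exact swap_mem_Rset hp
    rw [Finset.card_sdiff_of_subset hsub, Finset.card_pair]
    intro h
    have hp' := hp
    rw [mem_Rset] at hp'
    exact hp'.1 (congrArg Prod.fst h)
  rw [Finset.sum_congr rfl hper, Finset.sum_const, smul_eq_mul]

end WithColoring

/-- The fiber of `Tset` over a pair `(v, j)`: tuples `((v,x),(y,z))` whose middle edge
`s(x,y)` has color `j`. -/
def Fib (c : Sym2 (Fin n) → Fin k) (v : Fin n) (j : Fin k) :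
    Finset ((Fin n × Fin n) × (Fin n × Fin n)) :=
  (Tset c).filter (fun q => (q.1.1, c s(q.1.2, q.2.1)) = (v, j))

lemma mem_Fib {c : Sym2 (Fin n) → Fin k} {v : Fin n} {j : Fin k}
    {q : (Fin n × Fin n) × (Fin n × Fin n)} :
    q ∈ Fib c v j ↔ q ∈ Tset c ∧ q.1.1 = v ∧ c s(q.1.2, q.2.1) = j := by
  simp [Fib, Prod.ext_iff, and_assoc]

section WithColoring2

variable {c : Sym2 (Fin n) → Fin k}

/-- If `v` is covered by a `j`-edge then no tuple of `Tset` based at `v` has middle color `j`: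
this is the main consequence of the star condition. -/
lemma Fib_eq_empty (hc : IsStarEdgeColoring (completeGraph (Fin n)) c) {v : Fin n} {j : Fin k}
    (hvj : ∃ w : Fin n, v ≠ w ∧ c s(v, w) = j) : Fib c v j = ∅ := by
  obtain ⟨w, hvw, hw⟩ := hvj
  rw [Finset.eq_empty_iff_forall_notMem]
  rintro ⟨⟨a, x⟩, ⟨y, z⟩⟩ hq
  rw [mem_Fib, mem_Tset] at hq
  obtain ⟨⟨⟨hax, hyz⟩, ⟨hay, haz, hxy, hxz⟩, hcc⟩, hav, hj⟩ := hq
  simp only at hax hyz hay haz hxy hxz hcc hav hj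
  subst hav
  by_cases hwx : w = x
  · subst hwx
    exact prop_ne hc hax.symm hxy hay
      (by rw [Sym2.eq_swap (a := w) (b := a), hw]; exact hj.symm)
  by_cases hwy : w = y
  · subst hwy
    exact prop_ne hc hay.symm hxy.symm hax
      (by rw [Sym2.eq_swap (a := w) (b := a), hw, Sym2.eq_swap (a := w) (b := x)]
          exact hj.symm)
  · exact star5 hc (v0 := w) (v1 := a) (v2 := x) (v3 := y) (v4 := z)
      hvw.symm hax hxy hyz hwx hwy hay haz hxz
      (by rw [Sym2.eq_swap (a := w) (b := a), hw]; exact hj.symm) hcc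

/-- Key injectivity: twice the fiber cardinality is at most `r_j`. Per `j`-edge, at most one of
its two orientations can occur as middle edge of a tuple based at `v`, by the star condition. -/
lemma two_card_Fib_le (hc : IsStarEdgeColoring (completeGraph (Fin n)) c) (v : Fin n) (j : Fin k) :
    2 * (Fib c v j).card ≤ (Rset c j).card := by
  classical
  have hmaps : ∀ qb ∈ (Fib c v j ×ˢ (Finset.univ : Finset Bool)),
      (if qb.2 then (qb.1.1.2, qb.1.2.1) else (qb.1.2.1, qb.1.1.2)) ∈ Rset c j := by
    rintro ⟨⟨⟨a, x⟩, ⟨y, z⟩⟩, b⟩ hqb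
    rw [Finset.mem_product] at hqb
    have hq := hqb.1
    rw [mem_Fib, mem_Tset] at hq
    obtain ⟨⟨⟨hax, hyz⟩, ⟨hay, haz, hxy, hxz⟩, hcc⟩, hav, hj⟩ := hq
    simp only at hax hyz hay haz hxy hxz hcc hav hj
    rcases b <;> simp only [if_true, if_false, Bool.false_eq_true] <;> rw [mem_Rset]
    · exact ⟨hxy.symm, by rw [Sym2.eq_swap]; exact hj⟩
    · exact ⟨hxy, hj⟩
  have hinj : Set.InjOn
      (fun qb : ((Fin n × Fin n) × (Fin n × Fin n)) × Bool =>
        if qb.2 then (qb.1.1.2, qb.1.2.1) else (qb.1.2.1, qb.1.1.2))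
      ((Fib c v j ×ˢ (Finset.univ : Finset Bool)) :
        Finset (((Fin n × Fin n) × (Fin n × Fin n)) × Bool)) := by
    rintro ⟨⟨⟨a, x⟩, ⟨y, z⟩⟩, b⟩ hqb ⟨⟨⟨a', x'⟩, ⟨y', z'⟩⟩, b'⟩ hqb' heq
    simp only [Finset.coe_product, Set.mem_prod, Finset.mem_coe, mem_Fib, mem_Tset] at hqb hqb'
    obtain ⟨⟨⟨⟨hax, hyz⟩, ⟨hay, haz, hxy, hxz⟩, hcc⟩, hav, hj⟩, -⟩ := hqb
    obtain ⟨⟨⟨⟨hax', hyz'⟩, ⟨hay', haz', hxy', hxz'⟩, hcc'⟩, hav', hj'⟩, -⟩ := hqb'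
    simp only at hax hyz hay haz hxy hxz hcc hav hj hax' hyz' hay' haz' hxy' hxz' hcc' hav' hj' heq
    have haa' : a' = a := hav'.trans hav.symm
    subst haa'
    rcases b <;> rcases b' <;>
      simp only [if_true, if_false, Bool.false_eq_true, Prod.mk.injEq] at heq <;>
      obtain ⟨h1, h2⟩ := heq
    -- false,false : (y,x) = (y',x')
    · subst h1; subst h2
      have hzz : z = z' := partner_unique hc hyz hyz' (by rw [← hcc]; exact hcc')
      subst hzz; rfl
    -- false,true : (y,x) = (x',y'), i.e. x' = y, y' = x
    · exfalso
      subst h1; subst h2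
      exact star5 hc (v0 := z) (v1 := y) (v2 := a') (v3 := x) (v4 := z')
        hyz.symm hay.symm hax hyz' haz.symm hxz.symm hxy.symm hxz' haz'
        (by rw [Sym2.eq_swap (a := z) (b := y)]; exact hcc.symm)
        (by rw [Sym2.eq_swap (a := y) (b := a')]; exact hcc')
    -- true,false : (x,y) = (y',x'), i.e. y' = x, x' = y
    · exfalso
      subst h1; subst h2
      exact star5 hc (v0 := z) (v1 := y) (v2 := a') (v3 := x) (v4 := z')
        hyz.symm hay.symm hax hyz' haz.symm hxz.symm hxy.symm hxz' haz'
        (by rw [Sym2.eq_swap (a := z) (b := y)]; exact hcc.symm)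
        (by rw [Sym2.eq_swap (a := y) (b := a')]; exact hcc')
    -- true,true : (x,y) = (x',y')
    · subst h1; subst h2
      have hzz : z = z' := partner_unique hc hyz hyz' (by rw [← hcc]; exact hcc')
      subst hzz; rfl
  have := Finset.card_le_card_of_injOn _ hmaps hinj
  rw [Finset.card_product, Finset.card_univ, Fintype.card_bool] at this
  omega

lemma sum_Fib_le (hc : IsStarEdgeColoring (completeGraph (Fin n)) c) (j : Fin k) :
    ∑ v : Fin n, 2 * (Fib c v j).card ≤ (n - (Rset c j).card) * (Rset c j).card := by
  classical
  set A : Finset (Fin n) := Finset.univ.filter (fun v => (Fib c v j).Nonempty) with hA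
  have hzero : ∀ v ∈ (Finset.univ : Finset (Fin n)), v ∉ A → 2 * (Fib c v j).card = 0 := by
    intro v _ hv
    rw [hA, Finset.mem_filter] at hv
    push_neg at hv
    rw [hv (Finset.mem_univ v), Finset.card_empty,
      Nat.mul_zero]
  have hArj : A.card + (Rset c j).card ≤ n := by
    have hdisj : Disjoint A ((Rset c j).image Prod.fst) := by
      rw [Finset.disjoint_left]
      intro v hvA hvim
      obtain ⟨p, hp, hpv⟩ := Finset.mem_image.mp hvim
      have hp' := hp
      rw [mem_Rset] at hp'
      have hemp : Fib c v j = ∅ :=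
        Fib_eq_empty hc ⟨p.2, by rw [← hpv]; exact hp'.1, by rw [← hpv]; exact hp'.2⟩
      rw [hA, Finset.mem_filter, hemp] at hvA
      exact Finset.not_nonempty_empty hvA.2
    have himcard : ((Rset c j).image Prod.fst).card = (Rset c j).card :=
      Finset.card_image_of_injOn (fst_injOn hc j)
    calc A.card + (Rset c j).card = (A ∪ (Rset c j).image Prod.fst).card := by
          rw [Finset.card_union_of_disjoint hdisj, himcard]
      _ ≤ (Finset.univ : Finset (Fin n)).card := Finset.card_le_card (Finset.subset_univ _)
      _ = n := by simp
  calc ∑ v : Fin n, 2 * (Fib c v j).card = ∑ v ∈ A, 2 * (Fib c v j).card :=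
        (Finset.sum_subset (Finset.subset_univ A) hzero).symm
    _ ≤ ∑ _v ∈ A, (Rset c j).card := Finset.sum_le_sum (fun v _ => two_card_Fib_le hc v j)
    _ = A.card * (Rset c j).card := by rw [Finset.sum_const, smul_eq_mul]
    _ ≤ (n - (Rset c j).card) * (Rset c j).card := by
        apply Nat.mul_le_mul_right
        omega

lemma two_Tcard_le (hc : IsStarEdgeColoring (completeGraph (Fin n)) c) :
    2 * (Tset c).card ≤ ∑ j : Fin k, (n - (Rset c j).card) * (Rset c j).card := by
  classical
  have hT : (Tset c).card = ∑ b : Fin n × Fin k,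
      ((Tset c).filter (fun q => (q.1.1, c s(q.1.2, q.2.1)) = b)).card :=
    Finset.card_eq_sum_card_fiberwise (fun q _ => Finset.mem_univ _)
  rw [hT, Fintype.sum_prod_type_right, Finset.mul_sum]
  apply Finset.sum_le_sum
  intro j _
  rw [Finset.mul_sum]
  calc ∑ v : Fin n, 2 * ((Tset c).filter (fun q => (q.1.1, c s(q.1.2, q.2.1)) = (v, j))).card
      = ∑ v : Fin n, 2 * (Fib c v j).card := rfl
    _ ≤ (n - (Rset c j).card) * (Rset c j).card := sum_Fib_le hc j

end WithColoring2

section WithColoring3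

variable {c : Sym2 (Fin n) → Fin k}

theorem key (hc : IsStarEdgeColoring (completeGraph (Fin n)) c) :
    3 * (n * n - n) ≤ k * (n + 4) := by
  classical
  set r : Fin k → ℕ := fun j => (Rset c j).card with hrdef
  have h1 : ∑ j : Fin k, r j = n * n - n := sum_card_Rset
  have h2 : (Tset c).card = ∑ j : Fin k, r j * (r j - 2) := Tcard hc
  have h3 : 2 * (Tset c).card ≤ ∑ j : Fin k, (n - r j) * r j := two_Tcard_le hc
  have h4 : ∀ j, r j ≤ n := fun j => card_Rset_le hc j
  have h5 : ∑ j : Fin k, r j * r j ≤ (Tset c).card + 2 * ∑ j : Fin k, r j := by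
    rw [h2, Finset.mul_sum, ← Finset.sum_add_distrib]
    refine Finset.sum_le_sum (fun j _ => ?_)
    rcases le_or_gt 2 (r j) with h | h
    · have hh : r j - 2 + 2 = r j := Nat.sub_add_cancel h
      refine le_of_eq ?_
      calc r j * r j = r j * (r j - 2 + 2) := by rw [hh]
        _ = r j * (r j - 2) + 2 * r j := by ring
    · have h0 : r j - 2 = 0 := by omega
      rw [h0, Nat.mul_zero, Nat.zero_add]
      exact Nat.mul_le_mul (by omega) le_rfl
  have h7 : (∑ j : Fin k, (n - r j) * r j) + ∑ j : Fin k, r j * r j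
      = n * ∑ j : Fin k, r j := by
    rw [← Finset.sum_add_distrib, Finset.mul_sum]
    exact Finset.sum_congr rfl
      (fun j _ => by rw [← Nat.add_mul, Nat.sub_add_cancel (h4 j)])
  have hcs : (∑ j : Fin k, r j) ^ 2 ≤ k * ∑ j : Fin k, r j * r j := by
    have h := sq_sum_le_card_mul_sum_sq (s := (Finset.univ : Finset (Fin k))) (f := r)
    simpa [Finset.card_univ, pow_two] using h
  set S1 := ∑ j : Fin k, r j with hS1def
  set S2 := ∑ j : Fin k, r j * r j with hS2def
  set U := ∑ j : Fin k, (n - r j) * r j with hUdef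
  set Tc := (Tset c).card with hTcdef
  have h8 : 3 * S2 ≤ (n + 4) * S1 := by
    have hexp : (n + 4) * S1 = n * S1 + 4 * S1 := Nat.add_mul n 4 S1
    rw [hexp]
    generalize n * S1 = P at h7 ⊢
    omega
  rcases Nat.eq_zero_or_pos S1 with hS10 | hS1pos
  · rw [← h1, hS10]
    simp
  · have hmul : 3 * S1 * S1 ≤ k * (n + 4) * S1 := by
      calc 3 * S1 * S1 = 3 * S1 ^ 2 := by ring
        _ ≤ 3 * (k * S2) := Nat.mul_le_mul le_rfl hcs
        _ = k * (3 * S2) := by ring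
        _ ≤ k * ((n + 4) * S1) := Nat.mul_le_mul le_rfl h8
        _ = k * (n + 4) * S1 := by ring
    have hfin := Nat.le_of_mul_le_mul_right hmul hS1pos
    rw [← h1]
    exact hfin

end WithColoring3

end StarLowerAux

theorem star_chromatic_index_complete_lower (n : ℕ) (hn : 1 ≤ n) :
    (3 * n * (n - 1) : ℚ) / (n + 4) ≤ starChromaticIndex (completeGraph (Fin n)) := by
  classical
  have hex : ∃ k : ℕ, ∃ c : Sym2 (Fin n) → Fin k,
      IsStarEdgeColoring (completeGraph (Fin n)) c := by
    refine ⟨Fintype.card (Sym2 (Fin n)), fun e => (Fintype.equivFin (Sym2 (Fin n))) e, ?_, ?_⟩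
    · intro e f _ _ hef _
      exact fun h => hef ((Fintype.equivFin (Sym2 (Fin n))).injective h)
    · intro v0 v1 v2 v3 v4 _ _ _ _ h02 h03 _ _ _ h
      have he := (Fintype.equivFin (Sym2 (Fin n))).injective h.1
      rw [Sym2.eq_iff] at he
      rcases he with ⟨h1, _⟩ | ⟨h1, _⟩
      · exact h02 h1
      · exact h03 h1
  have hmem : starChromaticIndex (completeGraph (Fin n)) ∈
      {k | ∃ c : Sym2 (Fin n) → Fin k, IsStarEdgeColoring (completeGraph (Fin n)) c} := by
    apply Nat.sInf_mem
    obtain ⟨k0, hk0⟩ := hex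
    exact ⟨k0, hk0⟩
  obtain ⟨c, hc⟩ := hmem
  have hkey := StarLowerAux.key hc
  set K := starChromaticIndex (completeGraph (Fin n)) with hK
  rw [div_le_iff₀ (by positivity : (0:ℚ) < (n:ℚ) + 4)]
  have hmle : n ≤ n * n := Nat.le_mul_of_pos_left n hn
  have hle : ((3 * (n * n - n) : ℕ) : ℚ) ≤ ((K * (n + 4) : ℕ) : ℚ) := Nat.cast_le.mpr hkey
  push_cast [Nat.cast_sub hmle] at hle
  nlinarith [hle]
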